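/- For all real numbers μ₁, μ₂ with 0 < μ₁ < μ₂ < 1, one has maxS(μ₁, βopt(μ₂)) < 1 − √(1−μ₂); that is, evaluating the first quantity at the coefficient that is optimal for μ₂ gives a value strictly smaller than the optimal value min_{β∈ℝ} maxS(μ₂,β) = 1 − √(1−μ₂) for μ₂. -/

import Mathlib

lemma cpow_half_neg (x : ℝ) (hx : x < 0) :
    ((x:ℂ)) ^ ((1:ℂ)/2) = (Real.sqrt (-x) : ℂ) * Complex.I := by
  have hx0 : (x:ℂ) ≠ 0 := by exact_mod_cast hx.ne
  rw [Complex.cpow_def_of_ne_zero hx0, Complex.log, Complex.arg_ofReal_of_neg hx,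
    Complex.norm_real, Real.norm_eq_abs, abs_of_neg hx]
  have : (↑(Real.log (-x)) + ↑Real.pi * Complex.I) * (1/2)
      = (Real.log (-x) / 2 : ℝ) + (Real.pi / 2 : ℝ) * Complex.I := by
    push_cast; ring
  rw [this, Complex.exp_add, Complex.exp_mul_I]
  norm_cast
  rw [Real.cos_pi_div_two, Real.sin_pi_div_two]
  have hexp : Real.exp (Real.log (-x) / 2) = Real.sqrt (-x) := by
    rw [Real.sqrt_eq_rpow, Real.rpow_def_of_pos (by linarith)]
    ring_nf
  rw [hexp]; push_cast; ring

/-- The maximum of the moduli of the two complex roots (counted with multiplicity) of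
`λ² − (1+β)·μ·λ + β·μ = 0`; the roots are given by the quadratic formula
`((1+β)μ ± √((1+β)²μ² − 4βμ))/2` (complex square root via `cpow`). -/
noncomputable def maxS (μ β : ℝ) : ℝ :=
  max (‖(((((1 + β) * μ : ℝ) : ℂ) +
        ((((1 + β) ^ 2 * μ ^ 2 - 4 * β * μ : ℝ) : ℂ)) ^ ((1 : ℂ) / 2)) / 2)‖)
      (‖(((((1 + β) * μ : ℝ) : ℂ) -
        ((((1 + β) ^ 2 * μ ^ 2 - 4 * β * μ : ℝ) : ℂ)) ^ ((1 : ℂ) / 2)) / 2)‖)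

/-- The optimal coefficient `βopt(μ) = (1 − √(1−μ))/(1 + √(1−μ))`. -/
noncomputable def βopt (μ : ℝ) : ℝ := (1 - Real.sqrt (1 - μ)) / (1 + Real.sqrt (1 - μ))

theorem stmt1 (μ₁ μ₂ : ℝ) (h0 : 0 < μ₁) (h12 : μ₁ < μ₂) (h2 : μ₂ < 1) :
    maxS μ₁ (βopt μ₂) < 1 - Real.sqrt (1 - μ₂) := by
  set s := Real.sqrt (1 - μ₂) with hs
  have hs2 : s ^ 2 = 1 - μ₂ := Real.sq_sqrt (by linarith)
  have hs0 : 0 < s := Real.sqrt_pos.mpr (by linarith)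
  have hs1 : s < 1 := by nlinarith
  set β := βopt μ₂ with hβdef
  have hβ : β = (1 - s) / (1 + s) := rfl
  have h1s : (0:ℝ) < 1 + s := by linarith
  have hβ0 : 0 < β := by rw [hβ]; exact div_pos (by linarith) h1s
  have key : (1 + β) ^ 2 * μ₂ = 4 * β := by
    have hμ : μ₂ = 1 - s ^ 2 := by linarith
    rw [hβ, hμ]; field_simp; ring
  set D := (1 + β) ^ 2 * μ₁ ^ 2 - 4 * β * μ₁ with hD
  set a := (1 + β) * μ₁ with ha
  have hDneg : D < 0 := by
    have : (1 + β) ^ 2 * μ₁ < (1 + β) ^ 2 * μ₂ := by nlinarith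
    rw [hD]; nlinarith
  have habs : a ^ 2 - D = 4 * (β * μ₁) := by rw [hD, ha]; ring
  set t := Real.sqrt (-D) with ht
  have ht2 : t ^ 2 = -D := Real.sq_sqrt (by linarith)
  have hcp : (((D : ℝ)) : ℂ) ^ ((1:ℂ)/2) = (t : ℂ) * Complex.I := cpow_half_neg D hDneg
  have hroot : ∀ b : ℝ, ‖(((a : ℝ) : ℂ) + (b : ℂ) * Complex.I)‖
      = Real.sqrt (a ^ 2 + b ^ 2) := by
    intro b
    rw [Complex.norm_add_mul_I]
  have hval : ∀ b : ℝ, b ^ 2 = t ^ 2 →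
      ‖((((a : ℝ) : ℂ) + (b : ℂ) * Complex.I) / 2)‖ = Real.sqrt (β * μ₁) := by
    intro b hb
    rw [norm_div, hroot, Complex.norm_two, hb, ht2]
    rw [show a ^ 2 + -D = 4 * (β * μ₁) by linarith]
    rw [show (4 : ℝ) * (β * μ₁) = (2:ℝ)^2 * (β * μ₁) by ring,
      Real.sqrt_mul (by positivity), Real.sqrt_sq (by norm_num)]
    ring
  have hmaxS : maxS μ₁ β = Real.sqrt (β * μ₁) := by
    rw [maxS, ← ha]
    rw [show ((1 + β) ^ 2 * μ₁ ^ 2 - 4 * β * μ₁ : ℝ) = D from rfl, hcp]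
    have e1 : ((a : ℝ) : ℂ) + (t : ℂ) * Complex.I = ((a : ℝ) : ℂ) + ((t:ℝ) : ℂ) * Complex.I := rfl
    have e2 : ((a : ℝ) : ℂ) - (t : ℂ) * Complex.I = ((a : ℝ) : ℂ) + (((-t):ℝ) : ℂ) * Complex.I := by
      push_cast; ring
    rw [e2, hval t rfl, hval (-t) (by ring)]
    simp
  rw [hmaxS]
  have h1 : β * μ₁ < β * μ₂ := by nlinarith
  have h2' : β * μ₂ = (1 - s) ^ 2 := by
    have hμ : μ₂ = 1 - s ^ 2 := by linarith
    rw [hβ, hμ]; field_simp; ring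
  calc Real.sqrt (β * μ₁) < Real.sqrt (β * μ₂) :=
        Real.sqrt_lt_sqrt (by positivity) h1
    _ = 1 - s := by rw [h2', Real.sqrt_sq (by linarith)]
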